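/- Fix integers 1 ≤ r ≤ n. Let R be a commutative ring and c ∈ R. Then for every integer k with n − r + 1 ≤ k ≤ n − 1, the polynomial h_k · Δ lies in the ideal I_P(c) of R[x₁,…,x_r] generated by x₁^n − c, …, x_r^n − c. -/

import Mathlib

open Finset MvPolynomial

/-- The complete homogeneous symmetric polynomial of degree `k` in the variables
`x₁, …, x_r`: the sum of all monomials of total degree `k`. -/
noncomputable def hsymm (R : Type*) [CommRing R] (r k : ℕ) : MvPolynomial (Fin r) R :=
  ∑ d ∈ (Fintype.piFinset fun _ : Fin r => Finset.range (k + 1)).filter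
      (fun d => ∑ i, d i = k),
    ∏ i, X i ^ d i

/-- The Vandermonde determinant `Δ = ∏_{1 ≤ i < j ≤ r} (xᵢ - xⱼ)`. -/
noncomputable def vander (R : Type*) [CommRing R] (r : ℕ) : MvPolynomial (Fin r) R :=
  ∏ p ∈ Finset.univ.filter (fun p : Fin r × Fin r => p.1 < p.2), (X p.1 - X p.2)

/-- The ideal `I_P(c) = ⟨x₁ⁿ - c, …, x_rⁿ - c⟩` of `R[x₁,…,x_r]`. -/
noncomputable def IP (R : Type*) [CommRing R] (r n : ℕ) (c : R) :
    Ideal (MvPolynomial (Fin r) R) :=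
  Ideal.span (Set.range fun i : Fin r => X i ^ n - C c)

section AuxLemmas

variable {R : Type*} [CommRing R] {r : ℕ}



/-- geometric series ∑ (X i)^p t^p -/
noncomputable def geomS (R : Type*) [CommRing R] {r : ℕ} (i : Fin r) : PowerSeries (MvPolynomial (Fin r) R) :=
  PowerSeries.mk fun p => (X i : MvPolynomial (Fin r) R) ^ p

/-- ∏_{i ∈ S} (1 - X i t) -/
noncomputable def eS (R : Type*) [CommRing R] {r : ℕ} (S : Finset (Fin r)) :
    PowerSeries (MvPolynomial (Fin r) R) :=
  ∏ i ∈ S, (1 - PowerSeries.C (X i) * PowerSeries.X)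

theorem geom_inv (i : Fin r) :
    (1 - PowerSeries.C (X i) * PowerSeries.X) * geomS R i = 1 := by
  ext p
  rw [sub_mul, one_mul, mul_assoc, map_sub]
  cases p with
  | zero => simp [geomS]
  | succ p =>
    rw [PowerSeries.coeff_C_mul, PowerSeries.coeff_succ_X_mul]
    simp [geomS, pow_succ, mul_comm]

theorem eS_mul_prod_geom :
    eS R (univ : Finset (Fin r)) * ∏ i, geomS R i = 1 := by
  rw [eS, ← Finset.prod_mul_distrib]
  simp [geom_inv]

theorem eS_erase (j : Fin r) :
    eS R ((univ : Finset (Fin r)).erase j) * ∏ i, geomS R i = geomS R j := by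
  have h1 : (1 - PowerSeries.C (X j) * PowerSeries.X) * (eS R ((univ : Finset (Fin r)).erase j) * ∏ i, geomS R i) = 1 := by
    rw [← mul_assoc, mul_comm (1 - PowerSeries.C (X j) * PowerSeries.X), eS, Finset.prod_erase_mul _ _ (mem_univ j), ← eS, eS_mul_prod_geom]
  have h2 := geom_inv (R := R) j
  calc eS R ((univ : Finset (Fin r)).erase j) * ∏ i, geomS R i
      = (eS R ((univ : Finset (Fin r)).erase j) * ∏ i, geomS R i) * ((1 - PowerSeries.C (X j) * PowerSeries.X) * geomS R j) := by rw [h2, mul_one]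
    _ = ((1 - PowerSeries.C (X j) * PowerSeries.X) * (eS R ((univ : Finset (Fin r)).erase j) * ∏ i, geomS R i)) * geomS R j := by ring
    _ = geomS R j := by rw [h1, one_mul]

theorem coeff_eS_eq_zero {S : Finset (Fin r)} {s : ℕ} (h : S.card < s) :
    PowerSeries.coeff s (eS R S) = 0 := by
  classical
  induction S using Finset.induction generalizing s with
  | empty =>
    rw [eS, Finset.prod_empty]
    have : s ≠ 0 := by omega
    simp [PowerSeries.coeff_one, this]
  | @insert a S ha ih =>
    rw [eS, Finset.prod_insert ha, ← eS, sub_mul, one_mul, map_sub]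
    rw [Finset.card_insert_of_notMem ha] at h
    cases s with
    | zero => omega
    | succ s =>
      rw [mul_assoc, PowerSeries.coeff_C_mul, PowerSeries.coeff_succ_X_mul]
      rw [ih (by omega), ih (by omega), mul_zero, sub_zero]




theorem coeff_prod_geom (m : ℕ) :
    PowerSeries.coeff m (∏ i, geomS R i) = hsymm R r m := by
  classical
  rw [PowerSeries.coeff_prod]
  rw [_root_.hsymm]
  refine Finset.sum_nbij' (fun l => (l : Fin r → ℕ)) (fun d => Finsupp.equivFunOnFinite.symm d) ?_ ?_ ?_ ?_ ?_
  · intro l hl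
    rw [mem_finsuppAntidiag] at hl
    simp only [mem_filter, Fintype.mem_piFinset, mem_range]
    constructor
    · intro i
      have : l i ≤ m := hl.1 ▸ Finset.single_le_sum (fun _ _ => Nat.zero_le _) (mem_univ i)
      omega
    · exact hl.1
  · intro d hd
    rw [mem_finsuppAntidiag]
    simp only [mem_filter, Fintype.mem_piFinset, mem_range] at hd
    constructor
    · simpa using hd.2
    · exact Finset.subset_univ _
  · intro l _; exact Finsupp.equivFunOnFinite.symm_apply_apply l
  · intro d _; rfl
  · intro l _
    apply Finset.prod_congr rfl
    intro i _
    simp [geomS]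


theorem key_identity (j : Fin r) (p : ℕ) :
    ∑ s : Fin r, (if (s : ℕ) ≤ p then _root_.hsymm R r (p - s) else 0) *
      PowerSeries.coeff (s : ℕ) (eS R ((univ : Finset (Fin r)).erase j)) =
    (X j : MvPolynomial (Fin r) R) ^ p := by
  classical
  have h := eS_erase (R := R) j
  have h2 : PowerSeries.coeff p (eS R ((univ : Finset (Fin r)).erase j) * ∏ i, geomS R i)
      = (X j : MvPolynomial (Fin r) R) ^ p := by rw [h]; simp [geomS]
  rw [PowerSeries.coeff_mul, Finset.Nat.sum_antidiagonal_eq_sum_range_succ_mk] at h2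
  set E := eS R ((univ : Finset (Fin r)).erase j) with hE
  set F : ℕ → MvPolynomial (Fin r) R := fun s =>
    (if s ≤ p then _root_.hsymm R r (p - s) else 0) * PowerSeries.coeff s E with hF
  have cE : ∀ s : ℕ, r ≤ s → PowerSeries.coeff s E = 0 := by
    intro s hs
    apply coeff_eS_eq_zero
    rw [Finset.card_erase_of_mem (mem_univ j), card_univ, Fintype.card_fin]
    have hr0 : 0 < r := j.pos
    omega
  have e1 : ∑ s ∈ range (p + 1), PowerSeries.coeff s E *
      PowerSeries.coeff (p - s) (∏ i, geomS R i) = ∑ s ∈ range (p + 1), F s := by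
    apply Finset.sum_congr rfl
    intro s hs
    rw [mem_range] at hs
    rw [hF]
    simp only [if_pos (by omega : s ≤ p)]
    rw [coeff_prod_geom, mul_comm]
  have e2 : ∑ s ∈ range (p + 1), F s = ∑ s ∈ range (max (p + 1) r), F s := by
    apply Finset.sum_subset (Finset.range_subset_range.2 (le_max_left _ _))
    intro s _ hs
    rw [mem_range] at hs
    rw [hF]
    simp only [if_neg (by omega : ¬ s ≤ p), zero_mul]
  have e3 : ∑ s ∈ range r, F s = ∑ s ∈ range (max (p + 1) r), F s := by
    apply Finset.sum_subset (Finset.range_subset_range.2 (le_max_right _ _))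
    intro s _ hs
    rw [mem_range] at hs
    simp only [hF]
    rw [cE s (by omega), mul_zero]
  rw [← Fin.sum_univ_eq_sum_range] at e3
  rw [e1, e2, ← e3] at h2
  exact h2


theorem hsymm_zero' : _root_.hsymm R r 0 = 1 := by
  rw [_root_.hsymm]
  rw [Finset.sum_eq_single (fun _ => 0)]
  · simp
  · intro d hd hne
    simp only [mem_filter, Fintype.mem_piFinset, mem_range] at hd
    exfalso
    apply hne
    funext i
    have := hd.1 i
    omega
  · intro h
    exfalso
    apply h
    simp

noncomputable def Emat (R : Type*) [CommRing R] (r : ℕ) :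
    Matrix (Fin r) (Fin r) (MvPolynomial (Fin r) R) :=
  Matrix.of fun s j => PowerSeries.coeff (s : ℕ) (eS R ((univ : Finset (Fin r)).erase j))

noncomputable def Hmat (R : Type*) [CommRing R] {r : ℕ} (μ : Fin r → ℕ) :
    Matrix (Fin r) (Fin r) (MvPolynomial (Fin r) R) :=
  Matrix.of fun i s => if (s : ℕ) ≤ μ i then _root_.hsymm R r (μ i - s) else 0

noncomputable def Amat (R : Type*) [CommRing R] {r : ℕ} (μ : Fin r → ℕ) :
    Matrix (Fin r) (Fin r) (MvPolynomial (Fin r) R) :=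
  Matrix.of fun i j => (X j : MvPolynomial (Fin r) R) ^ μ i

theorem Hmat_mul_Emat (μ : Fin r → ℕ) : Hmat R μ * Emat R r = Amat R μ := by
  apply Matrix.ext
  intro i j
  rw [Matrix.mul_apply]
  show _ = (X j : MvPolynomial (Fin r) R) ^ μ i
  rw [← key_identity j (μ i)]
  apply Finset.sum_congr rfl
  intro s _
  rfl

theorem det_Amat (hr : 0 < r) (μ : Fin r → ℕ)
    (hμ : ∀ i : Fin r, 0 < (i : ℕ) → μ i = r - 1 - (i : ℕ))
    (h0 : r - 1 ≤ μ ⟨0, hr⟩) :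
    (Amat R μ).det = _root_.hsymm R r (μ ⟨0, hr⟩ - (r - 1)) *
      ((Emat R r).submatrix (⇑(Fin.revPerm : Equiv.Perm (Fin r))) id).det := by
  have hfac : (Hmat R μ).submatrix id (⇑(Fin.revPerm : Equiv.Perm (Fin r))) *
      (Emat R r).submatrix (⇑(Fin.revPerm : Equiv.Perm (Fin r))) id = Amat R μ := by
    rw [Matrix.submatrix_mul_equiv, Hmat_mul_Emat, Matrix.submatrix_id_id]
  rw [← hfac, Matrix.det_mul]
  congr 1
  have htri : ((Hmat R μ).submatrix id (⇑(Fin.revPerm : Equiv.Perm (Fin r)))).BlockTriangular id := by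
    intro i t ht
    simp only [id_eq] at ht
    have hi : 0 < (i : ℕ) := by
      have := Fin.lt_def.mp ht
      omega
    simp only [Matrix.submatrix_apply, Hmat, Matrix.of_apply, id_eq]
    rw [if_neg]
    rw [Fin.revPerm_apply, Fin.val_rev]
    rw [hμ i hi]
    have h1 := i.isLt
    have h2 := t.isLt
    have h3 := Fin.lt_def.mp ht
    omega
  rw [Matrix.det_of_upperTriangular htri]
  rw [Finset.prod_eq_single_of_mem (⟨0, hr⟩ : Fin r) (mem_univ _)]
  · simp only [Matrix.submatrix_apply, Hmat, Matrix.of_apply, id_eq, Fin.revPerm_apply,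
      Fin.val_rev]
    rw [if_pos (by omega)]
  · intro b _ hb
    have hbpos : 0 < (b : ℕ) := by
      rcases Nat.eq_zero_or_pos (b : ℕ) with h | h
      · exact absurd (Fin.ext h) hb
      · exact h
    simp only [Matrix.submatrix_apply, Hmat, Matrix.of_apply, id_eq, Fin.revPerm_apply,
      Fin.val_rev, hμ b hbpos]
    rw [if_pos (by have := b.isLt; omega)]
    have : r - 1 - (b : ℕ) - (r - (↑b + 1)) = 0 := by omega
    rw [this, hsymm_zero']

theorem prod_pairs {M : Type*} [CommMonoid M] (f : Fin r → Fin r → M) :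
    ∏ p ∈ Finset.univ.filter (fun p : Fin r × Fin r => p.1 < p.2), f p.1 p.2 =
    ∏ i, ∏ j ∈ Ioi i, f i j := by
  rw [Finset.prod_sigma']
  apply Finset.prod_nbij' (fun p : Fin r × Fin r => (⟨p.1, p.2⟩ : Σ _ : Fin r, Fin r))
    (fun x => (x.1, x.2))
  · intro p hp
    simp only [mem_filter, mem_univ, true_and] at hp
    simp [mem_Ioi, hp]
  · intro x hx
    simp only [mem_sigma, mem_univ, mem_Ioi, true_and] at hx
    simp [hx]
  · intro p _; rfl
  · intro x _; rfl
  · intro p _; rfl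

theorem det_Amat_B (hr : 0 < r) :
    (Amat R (fun i : Fin r => r - 1 - (i : ℕ))).det =
      (((Equiv.Perm.sign (Fin.revPerm : Equiv.Perm (Fin r)) : ℤ) : MvPolynomial (Fin r) R)) *
        ((-1) ^ (Finset.univ.filter (fun p : Fin r × Fin r => p.1 < p.2)).card *
          vander R r) := by
  have hAB : Amat R (fun i : Fin r => r - 1 - (i : ℕ)) =
      ((Matrix.vandermonde fun i : Fin r => (X i : MvPolynomial (Fin r) R)).transpose).submatrix
        (⇑(Fin.revPerm : Equiv.Perm (Fin r))) id := by
    apply Matrix.ext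
    intro i j
    simp only [Amat, Matrix.of_apply, Matrix.submatrix_apply, Matrix.transpose_apply,
      Matrix.vandermonde_apply, Fin.revPerm_apply, Fin.val_rev, id_eq]
    congr 1
    have := i.isLt
    omega
  rw [hAB, Matrix.det_permute, Matrix.det_transpose, Matrix.det_vandermonde]
  have h1 : ∏ i : Fin r, ∏ j ∈ Ioi i, ((X j : MvPolynomial (Fin r) R) - X i) =
      ∏ p ∈ Finset.univ.filter (fun p : Fin r × Fin r => p.1 < p.2), (X p.2 - X p.1) :=
    (prod_pairs fun a b => (X b : MvPolynomial (Fin r) R) - X a).symm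
  have h2 : ∏ p ∈ Finset.univ.filter (fun p : Fin r × Fin r => p.1 < p.2),
      ((X p.2 : MvPolynomial (Fin r) R) - X p.1) =
      (-1) ^ (Finset.univ.filter (fun p : Fin r × Fin r => p.1 < p.2)).card * vander R r := by
    rw [vander, ← Finset.prod_const (-1 : MvPolynomial (Fin r) R), ← Finset.prod_mul_distrib]
    apply Finset.prod_congr rfl
    intro p _
    ring
  rw [h1, h2]

theorem det_updateRow_mem {n' : ℕ} (c : R) (A : Matrix (Fin r) (Fin r) (MvPolynomial (Fin r) R))
    (i0 : Fin r) (e : ℕ) :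
    (A.updateRow i0 (fun j => X j ^ e * (X j ^ n' - C c))).det ∈ IP R r n' c := by
  rw [Matrix.det_apply']
  apply Ideal.sum_mem
  intro σ _
  apply Ideal.mul_mem_left
  set M := A.updateRow i0 (fun j => X j ^ e * (X j ^ n' - C c)) with hM
  rw [← Finset.mul_prod_erase univ _ (mem_univ (σ⁻¹ i0))]
  apply Ideal.mul_mem_right
  have h1 : M (σ (σ⁻¹ i0)) (σ⁻¹ i0) = X (σ⁻¹ i0) ^ e * (X (σ⁻¹ i0) ^ n' - C c) := by
    rw [show σ (σ⁻¹ i0) = i0 from σ.apply_symm_apply i0]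
    rw [hM, Matrix.updateRow_self]
  rw [h1]
  apply Ideal.mul_mem_left
  exact Ideal.subset_span ⟨σ⁻¹ i0, rfl⟩

theorem detA_mem (n : ℕ) (hr : 0 < r) (hrn : r ≤ n) (c : R) (k : ℕ)
    (hk1 : n - r + 1 ≤ k) (hk2 : k ≤ n - 1) :
    (Amat R (fun i : Fin r => if i = (⟨0, hr⟩ : Fin r) then k + r - 1 else r - 1 - (i : ℕ))).det
      ∈ IP R r n c := by
  have hn : 1 ≤ n := le_trans hr hrn
  have hr2 : 2 ≤ r := by omega
  set i0 : Fin r := ⟨0, hr⟩ with hi0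
  set e : ℕ := k + r - 1 - n with he
  have hen : e + n = k + r - 1 := by omega
  have her : e ≤ r - 2 := by omega
  set i1 : Fin r := ⟨r - 1 - e, by omega⟩ with hi1
  have hne : i1 ≠ i0 := by
    rw [hi1, hi0]
    intro h
    have := Fin.mk.injEq (r - 1 - e) _ 0 _ ▸ h
    simp only [Fin.mk.injEq] at h
    omega
  set μA : Fin r → ℕ := fun i => if i = i0 then k + r - 1 else r - 1 - (i : ℕ) with hμA
  set A := Amat R μA with hA
  have hrow : A i0 = (fun j => X j ^ e * (X j ^ n - C c)) + ((C c : MvPolynomial (Fin r) R) • fun j => (X j : MvPolynomial (Fin r) R) ^ e) := by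
    funext j
    simp only [hA, Amat, Matrix.of_apply, hμA, if_pos rfl, if_true, Pi.add_apply, Pi.smul_apply,
      smul_eq_mul]
    have : (X j : MvPolynomial (Fin r) R) ^ e * (X j ^ n - C c) + C c * X j ^ e
        = X j ^ (e + n) := by
      rw [pow_add]; ring
    rw [this, hen]
  have hsplit : A.det = (A.updateRow i0 (fun j => X j ^ e * (X j ^ n - C c))).det
      + C c * (A.updateRow i0 (fun j => (X j : MvPolynomial (Fin r) R) ^ e)).det := by
    conv_lhs => rw [← Matrix.updateRow_eq_self A i0, hrow]
    rw [Matrix.det_updateRow_add, Matrix.det_updateRow_smul]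
  have hzero : (A.updateRow i0 (fun j => (X j : MvPolynomial (Fin r) R) ^ e)).det = 0 := by
    apply Matrix.det_zero_of_row_eq (Ne.symm hne)
    rw [Matrix.updateRow_self, Matrix.updateRow_ne hne]
    funext j
    show (X j : MvPolynomial (Fin r) R) ^ e = X j ^ μA i1
    have : μA i1 = e := by
      show (if i1 = i0 then k + r - 1 else r - 1 - (i1 : ℕ)) = e
      rw [if_neg hne]
      show r - 1 - (r - 1 - e) = e
      omega
    rw [this]
  rw [hsplit, hzero, mul_zero, add_zero]
  exact det_updateRow_mem c A i0 e

end AuxLemmas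

/-- For `1 ≤ r ≤ n`, a commutative ring `R`, `c ∈ R`, and `n - r + 1 ≤ k ≤ n - 1`,
the polynomial `h_k · Δ` lies in the ideal `I_P(c) = ⟨x₁ⁿ - c, …, x_rⁿ - c⟩`. -/
theorem hk_mul_vandermonde_mem (n r : ℕ) (hr : 1 ≤ r) (hrn : r ≤ n)
    (R : Type*) [CommRing R] (c : R)
    (k : ℕ) (hk1 : n - r + 1 ≤ k) (hk2 : k ≤ n - 1) :
    hsymm R r k * vander R r ∈ IP R r n c := by
  have hr0 : 0 < r := hr
  set i0 : Fin r := ⟨0, hr0⟩ with hi0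
  set μA : Fin r → ℕ := fun i => if i = i0 then k + r - 1 else r - 1 - (i : ℕ) with hμA
  set sgn : MvPolynomial (Fin r) R :=
    ((Equiv.Perm.sign (Fin.revPerm : Equiv.Perm (Fin r)) : ℤ) : MvPolynomial (Fin r) R) with hsgn
  set N := (Finset.univ.filter (fun p : Fin r × Fin r => p.1 < p.2)).card with hN
  have hA : (Amat R μA).det = _root_.hsymm R r k *
      ((Emat R r).submatrix (⇑(Fin.revPerm : Equiv.Perm (Fin r))) id).det := by
    have h1 : ∀ i : Fin r, 0 < (i : ℕ) → μA i = r - 1 - (i : ℕ) := by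
      intro i hi
      have hne : i ≠ i0 := by
        intro h
        rw [h, hi0] at hi
        simp at hi
      show (if i = i0 then k + r - 1 else r - 1 - (i : ℕ)) = r - 1 - (i : ℕ)
      rw [if_neg hne]
    have hval : μA ⟨0, hr0⟩ = k + r - 1 := by
      show (if (⟨0, hr0⟩ : Fin r) = i0 then k + r - 1 else r - 1 - ((⟨0, hr0⟩ : Fin r) : ℕ))
        = k + r - 1
      rw [if_pos rfl]
    have h2 : r - 1 ≤ μA ⟨0, hr0⟩ := by rw [hval]; omega
    rw [det_Amat hr0 μA h1 h2]
    congr 2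
    rw [hval]
    omega
  have hB : (Amat R (fun i : Fin r => r - 1 - (i : ℕ))).det =
      ((Emat R r).submatrix (⇑(Fin.revPerm : Equiv.Perm (Fin r))) id).det := by
    rw [det_Amat hr0 (fun i => r - 1 - (i : ℕ)) (fun i _ => rfl)
      (by show r - 1 ≤ r - 1 - ((⟨0, hr0⟩ : Fin r) : ℕ); simp)]
    have : r - 1 - ((⟨0, hr0⟩ : Fin r) : ℕ) - (r - 1) = 0 := by simp
    rw [this, hsymm_zero', one_mul]
  have hB2 := det_Amat_B (R := R) hr0
  rw [← hsgn, ← hN] at hB2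
  have hErev : ((Emat R r).submatrix (⇑(Fin.revPerm : Equiv.Perm (Fin r))) id).det =
      sgn * ((-1) ^ N * vander R r) := by rw [← hB, hB2]
  have hs : sgn * sgn = 1 := by
    rw [hsgn, ← Int.cast_mul, ← Units.val_mul, Int.units_mul_self, Units.val_one, Int.cast_one]
  have hneg : ((-1 : MvPolynomial (Fin r) R) ^ N) * (-1) ^ N = 1 := by
    rw [← mul_pow]
    norm_num
  have key : (sgn * (-1) ^ N) * (Amat R μA).det = _root_.hsymm R r k * vander R r := by
    rw [hA, hErev]
    calc (sgn * (-1) ^ N) * (_root_.hsymm R r k * (sgn * ((-1) ^ N * vander R r)))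
        = (sgn * sgn) * (((-1 : MvPolynomial (Fin r) R) ^ N) * (-1) ^ N) *
          (_root_.hsymm R r k * vander R r) := by ring
      _ = _root_.hsymm R r k * vander R r := by rw [hs, hneg, one_mul, one_mul]
  rw [← key]
  exact Ideal.mul_mem_left _ _ (detA_mem n hr0 hrn c k hk1 hk2)
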